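/- If G is the vertex-sum of t ≥ 2 copies of the complete graph K_n (n ≥ 3) at a vertex, then D(G) = min{ k : C(k, n-1) ≥ t }, where C(k, n-1) is the binomial coefficient. -/

import Mathlib

open Function

section Defs

universe u₁ u₂ u₃

variable {V : Type u₁} {W : Type u₂} {C : Type u₃}

/-- A coloring is distinguishing if only the identity automorphism preserves it. -/
def DistCol (G : SimpleGraph V) (c : V → C) : Prop :=
  ∀ φ : G ≃g G, (∀ x, c (φ x) = c x) → ∀ x, φ x = x

/-- The distinguishing number: the least number of colors admitting a distinguishing coloring. -/
noncomputable def Dnum (G : SimpleGraph V) : ℕ :=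
  sInf {k | ∃ c : V → Fin k, DistCol G c}

/-- The distinguishing threshold: the least `k` such that every `k`-coloring is distinguishing. -/
noncomputable def theta (G : SimpleGraph V) : ℕ :=
  sInf {k | ∀ c : V → Fin k, DistCol G c}

/-- The number of non-equivalent distinguishing colorings with at most `k` colors. -/
noncomputable def Phi (G : SimpleGraph V) (k : ℕ) : ℕ :=
  Nat.card (Quot fun c₁ c₂ : {c : V → Fin k // DistCol G c} =>
    ∃ φ : G ≃g G, ∀ x, c₁.1 x = c₂.1 (φ x))

/-- Rooted version of distinguishing: only automorphisms fixing `v` are considered. -/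
def DistColR (G : SimpleGraph V) (v : V) (c : V → C) : Prop :=
  ∀ φ : G ≃g G, φ v = v → (∀ x, c (φ x) = c x) → ∀ x, φ x = x

noncomputable def DnumR (G : SimpleGraph V) (v : V) : ℕ :=
  sInf {k | ∃ c : V → Fin k, DistColR G v c}

noncomputable def thetaR (G : SimpleGraph V) (v : V) : ℕ :=
  sInf {k | ∀ c : V → Fin k, DistColR G v c}

noncomputable def PhiR (G : SimpleGraph V) (v : V) (k : ℕ) : ℕ :=
  Nat.card (Quot fun c₁ c₂ : {c : V → Fin k // DistColR G v c} =>
    ∃ φ : G ≃g G, φ v = v ∧ ∀ x, c₁.1 x = c₂.1 (φ x))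

/-- A vertex `u` is steady if every automorphism of `G - u` extends to an
automorphism of `G` fixing `u`. -/
def Steady (G : SimpleGraph V) (u : V) : Prop :=
  ∀ ψ : G.induce {w : V | w ≠ u} ≃g G.induce {w : V | w ≠ u},
    ∃ φ : G ≃g G, φ u = u ∧ ∀ w : {w : V | w ≠ u}, φ ↑w = ↑(ψ w)

/-- The vertex-sum of the graphs `G i` (all containing the vertex `u`) at `u`:
`none` is the central vertex obtained by identifying the copies of `u`. -/
def VertexSum {t : ℕ} (G : Fin t → SimpleGraph V) (u : V) :
    SimpleGraph (Option (Fin t × {w : V // w ≠ u})) where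
  Adj x y :=
    (∃ i w, x = none ∧ y = some (i, w) ∧ (G i).Adj u w.1) ∨
    (∃ i w, y = none ∧ x = some (i, w) ∧ (G i).Adj u w.1) ∨
    (∃ i w z, x = some (i, w) ∧ y = some (i, z) ∧ (G i).Adj w.1 z.1)
  symm := by
    constructor
    rintro x y (⟨i, w, hx, hy, h⟩ | ⟨i, w, hy, hx, h⟩ | ⟨i, w, z, hx, hy, h⟩)
    · exact Or.inr (Or.inl ⟨i, w, hx, hy, h⟩)
    · exact Or.inl ⟨i, w, hy, hx, h⟩
    · exact Or.inr (Or.inr ⟨i, z, w, hy, hx, h.symm⟩)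
  loopless := by
    constructor
    rintro x (⟨i, w, hx, hy, h⟩ | ⟨i, w, hy, hx, h⟩ | ⟨i, w, z, hx, hy, h⟩)
    · rw [hx] at hy; exact absurd hy (by simp)
    · rw [hy] at hx; exact absurd hx.symm (by simp)
    · rw [hx] at hy
      obtain rfl : w = z := by simpa using hy
      exact h.ne rfl

/-- Disjoint union of the graphs `H i`. -/
def SigmaUnion {t : ℕ} (H : Fin t → SimpleGraph W) : SimpleGraph (Fin t × W) where
  Adj x y := x.1 = y.1 ∧ (H x.1).Adj x.2 y.2
  symm := by
    constructor
    rintro ⟨i, a⟩ ⟨j, b⟩ ⟨rfl, h⟩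
    exact ⟨rfl, h.symm⟩
  loopless := by constructor; rintro x ⟨-, h⟩; exact h.ne rfl

/-- A graph is 2-connected if it has at least 3 vertices and no cut vertex. -/
def TwoConnected (G : SimpleGraph V) [Fintype V] : Prop :=
  3 ≤ Fintype.card V ∧ ∀ x : V, (G.induce {w : V | w ≠ x}).Connected

/-- The smooth rooted product `G_s(H)` where `H` is rooted at `v`. -/
def RootedProd (G : SimpleGraph V) (H : SimpleGraph W) (v : W) :
    SimpleGraph (V × W) where
  Adj x y := (x.1 = y.1 ∧ H.Adj x.2 y.2) ∨ (x.2 = v ∧ y.2 = v ∧ G.Adj x.1 y.1)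
  symm := by
    constructor
    rintro x y (⟨h1, h2⟩ | ⟨h1, h2, h3⟩)
    · exact Or.inl ⟨h1.symm, h2.symm⟩
    · exact Or.inr ⟨h2, h1, h3.symm⟩
  loopless := by constructor; rintro x (⟨-, h⟩ | ⟨-, -, h⟩) <;> exact h.ne rfl

/-- The corona product `G ⊙ H`: the vertex `(g, none)` is the vertex `g` of `G`,
and `(g, some h)` is the vertex `h` in the copy of `H` attached to `g`. -/
def Corona (G : SimpleGraph V) (H : SimpleGraph W) :
    SimpleGraph (V × Option W) where
  Adj x y :=
    (x.2 = none ∧ y.2 = none ∧ G.Adj x.1 y.1) ∨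
    (x.1 = y.1 ∧ ∃ a b, x.2 = some a ∧ y.2 = some b ∧ H.Adj a b) ∨
    (x.1 = y.1 ∧ x.2 = none ∧ ∃ a, y.2 = some a) ∨
    (x.1 = y.1 ∧ y.2 = none ∧ ∃ a, x.2 = some a)
  symm := by
    constructor
    rintro x y (⟨h1, h2, h3⟩ | ⟨h1, a, b, h2, h3, h4⟩ | ⟨h1, h2, h3⟩ | ⟨h1, h2, h3⟩)
    · exact Or.inl ⟨h2, h1, h3.symm⟩
    · exact Or.inr (Or.inl ⟨h1.symm, b, a, h3, h2, h4.symm⟩)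
    · exact Or.inr (Or.inr (Or.inr ⟨h1.symm, h2, h3⟩))
    · exact Or.inr (Or.inr (Or.inl ⟨h1.symm, h2, h3⟩))
  loopless := by
    constructor
    rintro x (⟨-, -, h⟩ | ⟨-, a, b, h2, h3, h4⟩ | ⟨-, h2, a, h3⟩ | ⟨-, h2, a, h3⟩)
    · exact h.ne rfl
    · rw [h2] at h3; exact h4.ne (Option.some.inj h3)
    · rw [h2] at h3; exact absurd h3 (by simp)
    · rw [h2] at h3; exact absurd h3 (by simp)

/-- The lexicographic product `G ∘ H`. -/
def LexProd (G : SimpleGraph V) (H : SimpleGraph W) : SimpleGraph (V × W) where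
  Adj x y := G.Adj x.1 y.1 ∨ (x.1 = y.1 ∧ H.Adj x.2 y.2)
  symm := by
    constructor
    rintro x y (h | ⟨h1, h2⟩)
    exacts [Or.inl h.symm, Or.inr ⟨h1.symm, h2.symm⟩]
  loopless := by constructor; rintro x (h | ⟨-, h⟩) <;> exact h.ne rfl

/-- The number of cycles (orbits, counting fixed points) of a permutation. -/
noncomputable def numCycles (e : Equiv.Perm V) : ℕ :=
  Nat.card (Quot fun x y : V => ∃ n : ℤ, (e ^ n) x = y)

end Defs

namespace Stmt7Aux

variable {n t : ℕ} {u : Fin n}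

abbrev KS (n t : ℕ) (u : Fin n) :
    SimpleGraph (Option (Fin t × {w : Fin n // w ≠ u})) :=
  VertexSum (fun _ : Fin t => (⊤ : SimpleGraph (Fin n))) u

lemma adj_none_some (i : Fin t) (w : {w : Fin n // w ≠ u}) :
    (KS n t u).Adj none (some (i, w)) :=
  Or.inl ⟨i, w, rfl, rfl, Ne.symm w.2⟩

lemma adj_some_some {i j : Fin t} {w z : {w : Fin n // w ≠ u}} :
    (KS n t u).Adj (some (i, w)) (some (j, z)) ↔ i = j ∧ w ≠ z := by
  constructor
  · rintro (⟨i', w', hx, hy, h⟩ | ⟨i', w', hy, hx, h⟩ | ⟨i', w', z', hx, hy, h⟩)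
    · exact absurd hx (by simp)
    · exact absurd hy (by simp)
    · obtain ⟨rfl, rfl⟩ : i = i' ∧ w = w' := by simpa using hx
      obtain ⟨rfl, rfl⟩ : j = i ∧ z = z' := by simpa [eq_comm] using hy
      exact ⟨rfl, fun hh => (by simpa using h : w.1 ≠ z.1) (by rw [hh])⟩
  · rintro ⟨rfl, hwz⟩
    exact Or.inr (Or.inr ⟨i, w, z, rfl, rfl, by simpa using Subtype.coe_injective.ne hwz⟩)

end Stmt7Aux

namespace Stmt7Aux

variable {n t : ℕ} {u : Fin n}

def mkAuto (σ : Equiv.Perm (Fin t)) (π : Fin t → Equiv.Perm {w : Fin n // w ≠ u}) :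
    KS n t u ≃g KS n t u where
  toEquiv := Equiv.optionCongr (Equiv.prodShear σ π)
  map_rel_iff' := by
    rintro (_ | ⟨i, w⟩) (_ | ⟨j, z⟩)
    · simp [SimpleGraph.irrefl]
    · simpa using ⟨fun _ => adj_none_some j z, fun _ => adj_none_some (σ j) (π j z)⟩
    · constructor
      · intro _; exact (adj_none_some i w).symm
      · intro _; exact (adj_none_some (σ i) (π i w)).symm
    · show (KS n t u).Adj (some (σ i, π i w)) (some (σ j, π j z)) ↔ _
      rw [adj_some_some, adj_some_some]
      constructor
      · rintro ⟨h1, h2⟩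
        obtain rfl := σ.injective h1
        exact ⟨rfl, fun hh => h2 (by rw [hh])⟩
      · rintro ⟨rfl, h2⟩
        exact ⟨rfl, fun hh => h2 ((π i).injective hh)⟩

@[simp] lemma mkAuto_none (σ : Equiv.Perm (Fin t)) (π : Fin t → Equiv.Perm {w : Fin n // w ≠ u}) :
    mkAuto σ π none = none := rfl

@[simp] lemma mkAuto_some (σ : Equiv.Perm (Fin t)) (π : Fin t → Equiv.Perm {w : Fin n // w ≠ u})
    (i : Fin t) (w : {w : Fin n // w ≠ u}) :
    mkAuto σ π (some (i, w)) = some (σ i, π i w) := rfl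

end Stmt7Aux

namespace Stmt7Aux

variable {n t : ℕ} {u : Fin n}

lemma fixes_none (hn : 3 ≤ n) (ht : 2 ≤ t) (φ : KS n t u ≃g KS n t u) :
    φ none = none := by
  haveI : Nontrivial (Fin n) := Fin.nontrivial_iff_two_le.mpr (by omega)
  haveI : Nontrivial (Fin t) := Fin.nontrivial_iff_two_le.mpr ht
  obtain ⟨v, hv⟩ := exists_ne u
  by_contra h
  obtain ⟨⟨i, w⟩, hiw⟩ : ∃ p, φ none = some p := by
    cases hx : φ none with
    | none => exact absurd hx h
    | some p => exact ⟨p, rfl⟩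
  obtain ⟨j, hj⟩ := exists_ne i
  set x : Option (Fin t × {w : Fin n // w ≠ u}) := some (j, ⟨v, hv⟩) with hxdef
  have hne : φ.symm x ≠ none := by
    intro hsym
    have : x = φ none := by rw [← hsym, φ.apply_symm_apply]
    rw [hiw] at this
    exact hj (by simpa [hxdef] using congrArg (Option.map Prod.fst) this)
  obtain ⟨⟨a, b⟩, hab⟩ : ∃ p, φ.symm x = some p := by
    cases hx : φ.symm x with
    | none => exact absurd hx hne
    | some p => exact ⟨p, rfl⟩
  have hadj : (KS n t u).Adj none (some (a, b)) := adj_none_some a b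
  have := φ.map_adj_iff.mpr hadj
  rw [hiw, ← hab, φ.apply_symm_apply, hxdef] at this
  exact hj ((adj_some_some.mp this).1.symm)

/-- the map on non-hub vertices induced by an automorphism fixing the hub -/
noncomputable def F (φ : KS n t u ≃g KS n t u) (p : Fin t × {w : Fin n // w ≠ u}) :
    Fin t × {w : Fin n // w ≠ u} :=
  (φ (some p)).getD p

lemma F_spec (φ : KS n t u ≃g KS n t u) (h0 : φ none = none)
    (p : Fin t × {w : Fin n // w ≠ u}) : φ (some p) = some (F φ p) := by
  cases hx : φ (some p) with
  | none =>
    exact absurd (φ.injective (hx.trans h0.symm)) (by simp)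
  | some q => simp [F, hx]

lemma F_injective (φ : KS n t u ≃g KS n t u) (h0 : φ none = none) :
    Function.Injective (F φ) := by
  intro p q h
  have := F_spec φ h0 p
  rw [h, ← F_spec φ h0 q] at this
  simpa using φ.injective this

lemma F_fst_const (φ : KS n t u ≃g KS n t u) (h0 : φ none = none)
    (i : Fin t) (w w' : {w : Fin n // w ≠ u}) :
    (F φ (i, w)).1 = (F φ (i, w')).1 := by
  rcases eq_or_ne w w' with rfl | hne
  · rfl
  · have hadj : (KS n t u).Adj (some (i, w)) (some (i, w')) := adj_some_some.mpr ⟨rfl, hne⟩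
    have := φ.map_adj_iff.mpr hadj
    rw [F_spec φ h0, F_spec φ h0] at this
    exact (adj_some_some.mp this).1

end Stmt7Aux

namespace Stmt7Aux

variable {n t : ℕ} {u : Fin n}

lemma card_S (hn : 3 ≤ n) : Fintype.card {w : Fin n // w ≠ u} = n - 1 := by
  have : Fintype.card {w : Fin n // ¬ (w = u)} =
      Fintype.card (Fin n) - Fintype.card {w : Fin n // w = u} :=
    Fintype.card_subtype_compl _
  simpa [Fintype.card_subtype_eq] using this

lemma exists_distcol (hn : 3 ≤ n) (ht : 2 ≤ t) {k : ℕ} (hk : t ≤ k.choose (n - 1)) :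
    ∃ c : Option (Fin t × {w : Fin n // w ≠ u}) → Fin k, DistCol (KS n t u) c := by
  have hk0 : 0 < k := by
    rcases Nat.eq_zero_or_pos k with rfl | h
    · rw [Nat.choose_eq_zero_of_lt (by omega)] at hk; omega
    · exact h
  -- an injection from copies to (n-1)-subsets of colors
  have hcard : Fintype.card (Fin t) ≤
      Fintype.card (Finset.powersetCard (n - 1) (Finset.univ : Finset (Fin k))) := by
    rw [Fintype.card_fin, Fintype.card_coe, Finset.card_powersetCard, Finset.card_univ,
      Fintype.card_fin]
    exact hk
  obtain ⟨A⟩ := Function.Embedding.nonempty_of_card_le hcard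
  have hAcard : ∀ i : Fin t, ((A i : Finset (Fin k))).card = n - 1 := fun i =>
    (Finset.mem_powersetCard.mp (A i).2).2
  have hg : ∀ i : Fin t,
      Fintype.card {w : Fin n // w ≠ u} = Fintype.card ((A i : Finset (Fin k)) : Finset (Fin k)) := by
    intro i
    rw [card_S hn, Fintype.card_coe, hAcard]
  let g : ∀ i : Fin t, {w : Fin n // w ≠ u} ≃ ((A i : Finset (Fin k)) : Finset (Fin k)) :=
    fun i => Fintype.equivOfCardEq (hg i)
  refine ⟨fun x => Option.rec ⟨0, hk0⟩ (fun p => (g p.1 p.2 : Fin k)) x, ?_⟩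
  intro φ hc x
  have h0 : φ none = none := fixes_none hn ht φ
  -- colors are preserved through F
  have hFc : ∀ p, ((g (F φ p).1 (F φ p).2 : Fin k)) = ((g p.1 p.2 : Fin k)) := by
    intro p
    have := hc (some p)
    rwa [F_spec φ h0] at this
  -- A i = A j where j is the constant first component
  have key : ∀ p, F φ p = p := by
    rintro ⟨i, w⟩
    set j := (F φ (i, w)).1 with hj
    have hAsub : (A i : Finset (Fin k)) ⊆ (A j : Finset (Fin k)) := by
      intro x hx
      obtain ⟨w', hw'⟩ : ∃ w', (g i w' : Fin k) = x := ⟨(g i).symm ⟨x, hx⟩, by simp⟩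
      have h1 := hFc (i, w')
      have h2 : (F φ (i, w')).1 = j := by rw [hj]; exact (F_fst_const φ h0 i w' w)
      rw [h2] at h1
      rw [← hw', ← h1]
      exact ((g j (F φ (i, w')).2)).2
    have hij : i = j := by
      have : (A i : Finset (Fin k)) = (A j : Finset (Fin k)) :=
        Finset.eq_of_subset_of_card_le hAsub (by rw [hAcard, hAcard])
      exact A.injective (Subtype.ext this)
    have h1 := hFc (i, w)
    rw [← hj, ← hij] at h1
    have : (g i (F φ (i, w)).2) = g i w := Subtype.ext h1
    have h2 : (F φ (i, w)).2 = w := (g i).injective this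
    have h3 : (F φ (i, w)).1 = i := hij.symm ▸ hj.symm
    exact Prod.ext h3 h2
  cases x with
  | none => exact h0
  | some p => rw [F_spec φ h0, key]

end Stmt7Aux

namespace Stmt7Aux

variable {n t : ℕ} {u : Fin n}

lemma distcol_imp (hn : 3 ≤ n) (ht : 2 ≤ t) {k : ℕ}
    (c : Option (Fin t × {w : Fin n // w ≠ u}) → Fin k) (hc : DistCol (KS n t u) c) :
    t ≤ k.choose (n - 1) := by
  haveI : Nontrivial (Fin n) := Fin.nontrivial_iff_two_le.mpr (by omega)
  obtain ⟨v, hv⟩ := exists_ne u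
  -- Step A: within each copy, the coloring is injective
  have hinj : ∀ i : Fin t, Function.Injective (fun w : {w : Fin n // w ≠ u} => c (some (i, w))) := by
    intro i w w' hcol
    by_contra hne
    set π : Fin t → Equiv.Perm {w : Fin n // w ≠ u} :=
      fun l => if l = i then Equiv.swap w w' else 1 with hπ
    have hpres : ∀ x, c (mkAuto (1 : Equiv.Perm (Fin t)) π x) = c x := by
      rintro (_ | ⟨l, z⟩)
      · rfl
      · rw [mkAuto_some]
        rcases eq_or_ne l i with rfl | hl
        · simp only [hπ, if_pos rfl, Equiv.Perm.one_apply]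
          rcases eq_or_ne z w with rfl | hzw
          · rw [Equiv.swap_apply_left]; exact hcol.symm
          · rcases eq_or_ne z w' with rfl | hzw'
            · rw [Equiv.swap_apply_right]; exact hcol
            · rw [Equiv.swap_apply_of_ne_of_ne hzw hzw']
        · simp [hπ, hl]
    have := hc (mkAuto 1 π) hpres (some (i, w))
    rw [mkAuto_some] at this
    simp only [hπ, if_pos rfl, Equiv.Perm.one_apply, Equiv.swap_apply_left] at this
    simp only [Option.some.injEq, Prod.mk.injEq] at this
    exact hne this.2.symm
  -- Step B: distinct copies get distinct color sets
  set B : Fin t → Finset (Fin k) :=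
    fun i => Finset.univ.image (fun w : {w : Fin n // w ≠ u} => c (some (i, w))) with hB
  have hBcard : ∀ i, (B i).card = n - 1 := by
    intro i
    rw [hB]
    rw [Finset.card_image_of_injective _ (hinj i), Finset.card_univ, card_S hn]
  have hBinj : Function.Injective B := by
    intro i j hBij
    by_contra hij
    -- ranges of the two color maps coincide
    have hr : Set.range (fun w : {w : Fin n // w ≠ u} => c (some (i, w))) =
        Set.range (fun w : {w : Fin n // w ≠ u} => c (some (j, w))) := by
      have h1 : ∀ l : Fin t, Set.range (fun w : {w : Fin n // w ≠ u} => c (some (l, w))) =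
          ↑(B l) := by
        intro l
        rw [hB, Finset.coe_image, Finset.coe_univ, Set.image_univ]
      rw [h1, h1, hBij]
    set p : {w : Fin n // w ≠ u} ≃ {w : Fin n // w ≠ u} :=
      (Equiv.ofInjective _ (hinj i)).trans ((Equiv.setCongr hr).trans
        (Equiv.ofInjective _ (hinj j)).symm) with hp
    have hpc : ∀ w, c (some (j, p w)) = c (some (i, w)) := by
      intro w
      have := Equiv.apply_ofInjective_symm (hinj j)
        ((Equiv.setCongr hr) (Equiv.ofInjective _ (hinj i) w))
      simpa [hp] using this
    set π : Fin t → Equiv.Perm {w : Fin n // w ≠ u} :=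
      fun l => if l = i then p else if l = j then p.symm else 1 with hπ
    have hpres : ∀ x, c (mkAuto (Equiv.swap i j) π x) = c x := by
      rintro (_ | ⟨l, z⟩)
      · rfl
      · rw [mkAuto_some]
        rcases eq_or_ne l i with rfl | hl
        · rw [Equiv.swap_apply_left]
          simp only [hπ, if_pos rfl]
          exact hpc z
        · rcases eq_or_ne l j with rfl | hl'
          · rw [Equiv.swap_apply_right]
            simp only [hπ, if_neg (Ne.symm hij), if_pos rfl]
            have := hpc (p.symm z)
            rw [Equiv.apply_symm_apply] at this
            exact this.symm
          · rw [Equiv.swap_apply_of_ne_of_ne hl hl']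
            simp [hπ, hl, hl']
    have := hc (mkAuto (Equiv.swap i j) π) hpres (some (i, ⟨v, hv⟩))
    rw [mkAuto_some, Equiv.swap_apply_left] at this
    simp only [Option.some.injEq, Prod.mk.injEq] at this
    exact hij this.1.symm
  -- conclude by counting
  have hmem : ∀ i, B i ∈ Finset.powersetCard (n - 1) (Finset.univ : Finset (Fin k)) := by
    intro i
    rw [Finset.mem_powersetCard]
    exact ⟨Finset.subset_univ _, hBcard i⟩
  have : Function.Injective (fun i : Fin t =>
      (⟨B i, hmem i⟩ : Finset.powersetCard (n - 1) (Finset.univ : Finset (Fin k)))) :=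
    fun i j h => hBinj (by simpa using congrArg Subtype.val h)
  have := Fintype.card_le_of_injective _ this
  rwa [Fintype.card_fin, Fintype.card_coe, Finset.card_powersetCard, Finset.card_univ,
    Fintype.card_fin] at this

end Stmt7Aux


/-- the distinguishing number of the vertex-sum of `t ≥ 2` copies of `K n`
(`n ≥ 3`) at a vertex is `min { k : C(k, n-1) ≥ t }`. -/
theorem stmt7 (n t : ℕ) (hn : 3 ≤ n) (ht : 2 ≤ t) (u : Fin n) :
    Dnum (VertexSum (fun _ : Fin t => (⊤ : SimpleGraph (Fin n))) u) =
      sInf {k | t ≤ k.choose (n - 1)} := by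
  have hset : {k | ∃ c : Option (Fin t × {w : Fin n // w ≠ u}) → Fin k,
      DistCol (VertexSum (fun _ : Fin t => (⊤ : SimpleGraph (Fin n))) u) c} =
      {k | t ≤ k.choose (n - 1)} := by
    ext k
    constructor
    · rintro ⟨c, hc⟩
      exact Stmt7Aux.distcol_imp hn ht c hc
    · intro hk
      exact Stmt7Aux.exists_distcol hn ht hk
  rw [Dnum, hset]
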